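/- Under the hypotheses of the ARE Lyapunov identity, if additionally X ≻ 0 and (C+DF, A+BF) has the property that (C+DF)x = 0 and (A+BF)x = λx imply x = 0 for eigenvectors with Re λ ≥ 0, then every eigenvalue of A+BF has strictly negative real part (A+BF is Hurwitz). -/

import Mathlib

open Matrix ComplexOrder

lemma re_star_dot_map_pos {n : ℕ} {X : Matrix (Fin n) (Fin n) ℝ} (hX : X.PosDef)
    {x : Fin n → ℂ} (hx : x ≠ 0) :
    0 < (star x ⬝ᵥ (X.map (algebraMap ℝ ℂ)) *ᵥ x).re := by
  set a : Fin n → ℝ := fun i => (x i).re with ha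
  set b : Fin n → ℝ := fun i => (x i).im with hb
  have key : (star x ⬝ᵥ (X.map (algebraMap ℝ ℂ)) *ᵥ x).re
      = star a ⬝ᵥ X *ᵥ a + star b ⬝ᵥ X *ᵥ b := by
    simp only [dotProduct, mulVec, Pi.star_apply, Complex.re_sum, Finset.mul_sum,
      map_apply, star_trivial, ← Finset.sum_add_distrib]
    refine Finset.sum_congr rfl fun i _ => ?_
    refine Finset.sum_congr rfl fun j _ => ?_
    simp [Complex.mul_re, Complex.mul_im, ha, hb, Complex.ext_iff]
  rw [key]
  rcases (by
    by_contra h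
    push_neg at h
    apply hx
    funext i
    have h1 : a i = 0 := by rw [h.1]; rfl
    have h2 : b i = 0 := by rw [h.2]; rfl
    exact Complex.ext h1 h2 : a ≠ 0 ∨ b ≠ 0) with h | h
  · have := hX.dotProduct_mulVec_pos h
    have h2 : (0:ℝ) ≤ star b ⬝ᵥ X *ᵥ b := hX.posSemidef.dotProduct_mulVec_nonneg b
    linarith
  · have := hX.dotProduct_mulVec_pos h
    have h2 : (0:ℝ) ≤ star a ⬝ᵥ X *ᵥ a := hX.posSemidef.dotProduct_mulVec_nonneg a
    linarith

lemma map_mulVec_star {k n : ℕ} (M : Matrix (Fin k) (Fin n) ℝ) (v : Fin n → ℂ) :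
    (M.map (algebraMap ℝ ℂ)) *ᵥ star v = star ((M.map (algebraMap ℝ ℂ)) *ᵥ v) := by
  funext i
  simp only [mulVec, dotProduct, Pi.star_apply, map_apply, Complex.star_def, map_sum,
    _root_.map_mul, Complex.coe_algebraMap, Complex.conj_ofReal]

/-- If `X ≻ 0` solves the ARE, `F` is the LQR gain, and the closed loop
`(C+DF, A+BF)` has no unobservable eigenvector with eigenvalue of nonnegative
real part, then `A + BF` is Hurwitz: every eigenvalue (over `ℂ`) has strictly
negative real part. -/
theorem are_closed_loop_hurwitz
    {n m p : ℕ}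
    (A : Matrix (Fin n) (Fin n) ℝ) (B : Matrix (Fin n) (Fin m) ℝ)
    (C : Matrix (Fin p) (Fin n) ℝ) (D : Matrix (Fin p) (Fin m) ℝ)
    (X : Matrix (Fin n) (Fin n) ℝ)
    (hX : X.PosDef) (hXsymm : X.IsSymm)
    (hDD : (Dᵀ * D).PosDef)
    (hARE : Aᵀ * X + X * A + Cᵀ * C -
      (X * B + Cᵀ * D) * (Dᵀ * D)⁻¹ * (Bᵀ * X + Dᵀ * C) = 0)
    (F : Matrix (Fin m) (Fin n) ℝ)
    (hF : F = -((Dᵀ * D)⁻¹ * (Bᵀ * X + Dᵀ * C)))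
    (hdetect : ∀ (μ : ℂ) (x : Fin n → ℂ),
      0 ≤ μ.re →
      ((A + B * F).map (algebraMap ℝ ℂ)).mulVec x = μ • x →
      ((C + D * F).map (algebraMap ℝ ℂ)).mulVec x = 0 →
      x = 0) :
    ∀ μ ∈ spectrum ℂ ((A + B * F).map (algebraMap ℝ ℂ)), μ.re < 0 := by
  intro μ hμ
  have hXT : Xᵀ = X := hXsymm
  have hDDu : IsUnit (Dᵀ * D).det := hDD.det_pos.ne'.isUnit
  have hGT : ((Dᵀ * D)⁻¹)ᵀ = (Dᵀ * D)⁻¹ := by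
    rw [Matrix.transpose_nonsing_inv, Matrix.transpose_mul, Matrix.transpose_transpose]
  have hGDD : (Dᵀ * D)⁻¹ * (Dᵀ * D) = 1 := Matrix.nonsing_inv_mul _ hDDu
  have hLyap : (A + B * F)ᵀ * X + X * (A + B * F) + (C + D * F)ᵀ * (C + D * F) = 0 := by
    have expand : (A + B * F)ᵀ * X + X * (A + B * F) + (C + D * F)ᵀ * (C + D * F)
        = (Aᵀ * X + X * A + Cᵀ * C - (X * B + Cᵀ * D) * (Dᵀ * D)⁻¹ * (Bᵀ * X + Dᵀ * C))
          + (X * B + Cᵀ * D) * (((Dᵀ * D)⁻¹ * (Dᵀ * D)) - 1) *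
            ((Dᵀ * D)⁻¹ * (Bᵀ * X + Dᵀ * C)) := by
      subst hF
      simp only [transpose_add, transpose_mul, transpose_neg, hXT, hGT, transpose_transpose,
        Matrix.mul_add, Matrix.add_mul, Matrix.mul_neg, Matrix.neg_mul, Matrix.mul_one,
        Matrix.one_mul, sub_eq_add_neg, neg_add_rev, neg_neg, Matrix.mul_sub, Matrix.sub_mul,
        Matrix.mul_assoc]
      abel
    rw [expand, hGDD, hARE]
    simp
  set Ac := (A + B * F).map (algebraMap ℝ ℂ) with hAc
  set Cc := (C + D * F).map (algebraMap ℝ ℂ) with hCc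
  set Xc := X.map (algebraMap ℝ ℂ) with hXc
  have hmadd : ∀ {k l : ℕ} (M N : Matrix (Fin k) (Fin l) ℝ),
      (M + N).map (algebraMap ℝ ℂ) = M.map (algebraMap ℝ ℂ) + N.map (algebraMap ℝ ℂ) :=
    fun M N => Matrix.map_add _ (by simp) M N
  have hLyapC : Acᵀ * Xc + Xc * Ac + Ccᵀ * Cc = 0 := by
    have key : ((A + B * F)ᵀ * X + X * (A + B * F) + (C + D * F)ᵀ * (C + D * F)).map
        (algebraMap ℝ ℂ) = Acᵀ * Xc + Xc * Ac + Ccᵀ * Cc := by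
      simp only [hAc, hCc, hXc]
      rw [hmadd, hmadd, Matrix.map_mul, Matrix.map_mul, Matrix.map_mul,
        Matrix.transpose_map, Matrix.transpose_map]
    rw [← key, hLyap]
    exact Matrix.map_zero _ (map_zero _)
  have hdet : (μ • (1 : Matrix (Fin n) (Fin n) ℂ) - Ac).det = 0 := by
    rw [spectrum.mem_iff] at hμ
    rw [Algebra.algebraMap_eq_smul_one] at hμ
    by_contra h
    exact hμ ((Matrix.isUnit_iff_isUnit_det _).2 (isUnit_iff_ne_zero.2 h))
  obtain ⟨v, hv0, hv⟩ := (Matrix.exists_mulVec_eq_zero_iff).2 hdet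
  have heig : Ac *ᵥ v = μ • v := by
    rw [sub_mulVec, smul_mulVec, one_mulVec, sub_eq_zero] at hv
    exact hv.symm
  set q := star v ⬝ᵥ Xc *ᵥ v with hq
  set w := Cc *ᵥ v with hw
  have h0 : star v ⬝ᵥ ((Acᵀ * Xc + Xc * Ac + Ccᵀ * Cc) *ᵥ v) = 0 := by
    rw [hLyapC]; simp
  have hstarA : Ac *ᵥ star v = star (Ac *ᵥ v) := map_mulVec_star _ v
  have hstarC : Cc *ᵥ star v = star (Cc *ᵥ v) := map_mulVec_star _ v
  have term1 : star v ⬝ᵥ (Acᵀ * Xc) *ᵥ v = (starRingEnd ℂ) μ * q := by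
    rw [← mulVec_mulVec, dotProduct_mulVec, vecMul_transpose, hstarA, heig, star_smul,
      smul_dotProduct]
    rfl
  have term2 : star v ⬝ᵥ (Xc * Ac) *ᵥ v = μ * q := by
    rw [← mulVec_mulVec, heig, mulVec_smul, dotProduct_smul]
    rfl
  have term3 : star v ⬝ᵥ (Ccᵀ * Cc) *ᵥ v = star w ⬝ᵥ w := by
    rw [← mulVec_mulVec, dotProduct_mulVec, vecMul_transpose, hstarC, hw]
  have heq : (starRingEnd ℂ) μ * q + μ * q + star w ⬝ᵥ w = 0 := by
    rw [← term1, ← term2, ← term3, ← dotProduct_add, ← dotProduct_add, ← add_mulVec,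
      ← add_mulVec]
    exact h0
  have hr : (0 : ℂ) ≤ star w ⬝ᵥ w := dotProduct_star_self_nonneg w
  have hrre : 0 ≤ (star w ⬝ᵥ w).re := by simpa using (Complex.le_def.1 hr).1
  have hrim : (star w ⬝ᵥ w).im = 0 := by simpa using ((Complex.le_def.1 hr).2).symm
  have hqre : 0 < q.re := re_star_dot_map_pos hX hv0
  by_contra hcontra
  push_neg at hcontra
  have hmain : μ.re * q.re + μ.re * q.re + (star w ⬝ᵥ w).re = 0 := by
    have := congrArg Complex.re heq
    simpa [Complex.add_re, Complex.mul_re, Complex.conj_re, Complex.conj_im] using this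
  have hw0 : w = 0 := by
    have h1 : (star w ⬝ᵥ w).re = 0 := by nlinarith
    have h2 : star w ⬝ᵥ w = 0 := Complex.ext h1 hrim
    exact dotProduct_star_self_eq_zero.1 h2
  exact hv0 (hdetect μ v hcontra heig hw0)
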